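/- Let m be a positive integer and x a real number. Then in ℝ[[z]] the exponential generating function of the bivariate geometric polynomials satisfies (m + x − x·e^{mz}) · ∑_{n≥0} ω_n(x,m) z^n/n! = m; equivalently ∑_{n≥0} ω_n(x,m) z^n/n! = m/(m + x − x e^{mz}). -/

import Mathlib

/-- Stirling numbers of the second kind:
`S(n,k) = (1/k!) ∑_{j=0}^k (−1)^{k−j} C(k,j) j^n`. -/
noncomputable def stirling2 (n k : ℕ) : ℝ :=
  (1 / (k.factorial : ℝ)) *
    ∑ j ∈ Finset.range (k + 1), (-1 : ℝ) ^ (k - j) * (k.choose j) * (j : ℝ) ^ n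

/-- Bivariate geometric polynomials `ω_n(x,m) = ∑_{k=0}^n k!·S(n,k)·x^k·m^{n−k}`. -/
noncomputable def geomPoly (n : ℕ) (x : ℝ) (m : ℕ) : ℝ :=
  ∑ k ∈ Finset.range (n + 1), (k.factorial : ℝ) * stirling2 n k * x ^ k * (m : ℝ) ^ (n - k)

open Finset

noncomputable def cc (n a : ℕ) : ℝ :=
  ∑ j ∈ Finset.range (a + 1), (-1 : ℝ) ^ (a - j) * (a.choose j) * (j : ℝ) ^ n

lemma L (N a : ℕ) :
    ∑ j ∈ Finset.range (a + 1), (-1 : ℝ) ^ (a - j) * (a.choose j) * ((j : ℝ) + 1) ^ N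
      = cc N (a + 1) + cc N a := by
  have h1 : cc N (a+1) = ∑ i ∈ range (a+1),
      (-1:ℝ)^(a-i) * ((a+1).choose (i+1)) * ((i:ℝ)+1)^N + (-1:ℝ)^(a+1) * (0:ℝ)^N := by
    rw [cc, sum_range_succ']
    simp [Nat.succ_sub_succ]
  have h2 : cc N a = ∑ i ∈ range a,
      (-1:ℝ)^(a-(i+1)) * (a.choose (i+1)) * ((i:ℝ)+1)^N + (-1:ℝ)^a * (0:ℝ)^N := by
    rw [cc, sum_range_succ']
    simp
  have hS2 : ∑ j ∈ range (a+1), (-1:ℝ)^(a-j) * (a.choose (j+1)) * ((j:ℝ)+1)^N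
      = -(∑ i ∈ range a, (-1:ℝ)^(a-(i+1)) * (a.choose (i+1)) * ((i:ℝ)+1)^N) := by
    rw [sum_range_succ, Nat.choose_succ_self]
    rw [← Finset.sum_neg_distrib]
    simp only [Nat.cast_zero, mul_zero, zero_mul, add_zero]
    apply Finset.sum_congr rfl
    intro i hi
    have hlt : i < a := Finset.mem_range.mp hi
    have : a - i = (a - (i+1)) + 1 := by omega
    rw [this]
    ring
  have pascal : ∀ j, ((a+1).choose (j+1) : ℝ) = (a.choose j : ℝ) + (a.choose (j+1) : ℝ) := by
    intro j
    rw [Nat.choose_succ_succ]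
    push_cast; ring
  have expand : ∑ j ∈ range (a+1), (-1:ℝ)^(a-j) * (a.choose j) * ((j:ℝ)+1)^N
      = ∑ j ∈ range (a+1), (-1:ℝ)^(a-j) * ((a+1).choose (j+1)) * ((j:ℝ)+1)^N
        - ∑ j ∈ range (a+1), (-1:ℝ)^(a-j) * (a.choose (j+1)) * ((j:ℝ)+1)^N := by
    rw [← Finset.sum_sub_distrib]
    apply Finset.sum_congr rfl
    intro j _
    rw [pascal j]; ring
  rw [expand, hS2]
  have e1 : ∑ i ∈ range (a+1), (-1:ℝ)^(a-i) * ((a+1).choose (i+1)) * ((i:ℝ)+1)^N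
      = cc N (a+1) - (-1:ℝ)^(a+1) * (0:ℝ)^N := by rw [h1]; ring
  have e2 : ∑ i ∈ range a, (-1:ℝ)^(a-(i+1)) * (a.choose (i+1)) * ((i:ℝ)+1)^N
      = cc N a - (-1:ℝ)^a * (0:ℝ)^N := by rw [h2]; ring
  rw [e1, e2, pow_succ]
  ring

lemma cc_rec (n a : ℕ) :
    cc (n+1) (a+1) = ((a:ℝ)+1) * (cc n (a+1) + cc n a) := by
  rw [← L n a, cc, sum_range_succ']
  simp only [Nat.cast_zero, Nat.succ_sub_succ]
  rw [Finset.mul_sum]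
  simp only [zero_pow (Nat.succ_ne_zero n), mul_zero, add_zero]
  apply Finset.sum_congr rfl
  intro i hi
  have key : ((a+1).choose (i+1) : ℝ) * ((i:ℝ)+1) = ((a:ℝ)+1) * (a.choose i) := by
    have := Nat.add_one_mul_choose_eq a i
    have : ((a+1) * a.choose i : ℕ) = ((a+1).choose (i+1) * (i+1) : ℕ) := this
    have := congrArg (Nat.cast : ℕ → ℝ) this
    push_cast at this
    linarith
  push_cast
  calc (-1:ℝ)^(a-i) * ((a+1).choose (i+1)) * ((i:ℝ)+1)^(n+1)
      = ((-1:ℝ)^(a-i) * (((a+1).choose (i+1) : ℝ) * ((i:ℝ)+1))) * ((i:ℝ)+1)^n := by ring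
    _ = ((a:ℝ)+1) * ((-1:ℝ)^(a-i) * (a.choose i) * ((i:ℝ)+1)^n) := by rw [key]; ring

lemma cc_eq_zero : ∀ n a : ℕ, n < a → cc n a = 0 := by
  intro n
  induction n with
  | zero =>
    intro a ha
    obtain ⟨b, rfl⟩ : ∃ b, a = b + 1 := ⟨a - 1, by omega⟩
    have := Int.alternating_sum_range_choose (n := b+1)
    have h2 := congrArg (Int.cast : ℤ → ℝ) this
    push_cast at h2
    have : cc 0 (b+1) = (-1:ℝ)^(b+1) * ∑ i ∈ range (b+2), (-1:ℝ)^i * ((b+1).choose i) := by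
      rw [cc, Finset.mul_sum]
      apply Finset.sum_congr rfl
      intro i hi
      have hile : i ≤ b + 1 := by have := Finset.mem_range.mp hi; omega
      have : (-1:ℝ)^(b+1-i) * (-1:ℝ)^i = (-1:ℝ)^(b+1) := by
        rw [← pow_add]; congr 1; omega
      rw [pow_zero, mul_one, ← this]
      have sq : (-1:ℝ)^i * (-1:ℝ)^i = 1 := by rw [← mul_pow]; norm_num
      linear_combination (-( (-1:ℝ)^(b+1-i) * (((b+1).choose i : ℕ) : ℝ))) * sq
    rw [this, h2, mul_zero]
  | succ n ih =>
    intro a ha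
    obtain ⟨b, rfl⟩ : ∃ b, a = b + 1 := ⟨a - 1, by omega⟩
    rw [cc_rec, ih (b+1) (by omega), ih b (by omega)]
    ring

lemma fact_stir (n k : ℕ) : (k.factorial : ℝ) * stirling2 n k = cc n k := by
  rw [stirling2, cc, ← mul_assoc, mul_one_div, div_self (by positivity : (k.factorial:ℝ) ≠ 0), one_mul]

lemma geomPoly_eq (x : ℝ) (m n : ℕ) :
    geomPoly n x m = ∑ k ∈ range (n+1), cc n k * x ^ k * (m:ℝ) ^ (n-k) := by
  rw [geomPoly]
  exact Finset.sum_congr rfl fun k _ => by rw [fact_stir]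

lemma cc_zero_right (n : ℕ) (hn : 1 ≤ n) : cc n 0 = 0 := by
  simp [cc, zero_pow (by omega : n ≠ 0)]

lemma geomPoly_zero (x : ℝ) (m : ℕ) : geomPoly 0 x m = 1 := by
  rw [geomPoly_eq]
  simp [cc]

lemma step1 (x : ℝ) (m n k : ℕ) (hk : k ≤ n) :
    (m:ℝ)^k * geomPoly (n-k) x m
      = ∑ a ∈ range (n+1), cc (n-k) a * x ^ a * (m:ℝ) ^ (n-a) := by
  rw [geomPoly_eq, Finset.mul_sum]
  rw [← Finset.sum_subset (Finset.range_subset_range.mpr (by omega : n-k+1 ≤ n+1))]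
  · apply Finset.sum_congr rfl
    intro a ha
    have ha' : a ≤ n - k := by have := Finset.mem_range.mp ha; omega
    have : (m:ℝ)^k * (m:ℝ)^(n-k-a) = (m:ℝ)^(n-a) := by
      rw [← pow_add]; congr 1; omega
    calc (m:ℝ)^k * (cc (n-k) a * x^a * (m:ℝ)^(n-k-a))
        = cc (n-k) a * x^a * ((m:ℝ)^k * (m:ℝ)^(n-k-a)) := by ring
      _ = cc (n-k) a * x^a * (m:ℝ)^(n-a) := by rw [this]
  · intro a ha hna
    have : n - k < a := by
      have := Finset.mem_range.mp ha
      simp only [Finset.mem_range, not_lt] at hna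
      omega
    rw [cc_eq_zero _ _ this]; ring

lemma innerSum (n a : ℕ) :
    ∑ k ∈ range (n+1), (n.choose k : ℝ) * cc (n-k) a = cc n (a+1) + cc n a := by
  rw [← L n a]
  have h1 : ∀ k, (n.choose k:ℝ) * cc (n-k) a
      = ∑ j ∈ range (a+1), (-1:ℝ)^(a-j)*(a.choose j)*((n.choose k:ℝ) * (j:ℝ)^(n-k)) := by
    intro k
    rw [cc, Finset.mul_sum]
    exact Finset.sum_congr rfl fun j _ => by ring
  calc ∑ k ∈ range (n+1), (n.choose k : ℝ) * cc (n-k) a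
      = ∑ k ∈ range (n+1), ∑ j ∈ range (a+1),
          (-1:ℝ)^(a-j)*(a.choose j)*((n.choose k:ℝ) * (j:ℝ)^(n-k)) :=
        Finset.sum_congr rfl fun k _ => h1 k
    _ = ∑ j ∈ range (a+1), ∑ k ∈ range (n+1),
          (-1:ℝ)^(a-j)*(a.choose j)*((n.choose k:ℝ) * (j:ℝ)^(n-k)) := Finset.sum_comm
    _ = ∑ j ∈ range (a+1), (-1:ℝ)^(a-j)*(a.choose j)*((j:ℝ)+1)^n := by
        apply Finset.sum_congr rfl
        intro j _
        rw [← Finset.mul_sum]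
        congr 1
        have h := add_pow (1:ℝ) (j:ℝ) n
        rw [add_comm (1:ℝ) (j:ℝ)] at h
        rw [h]
        exact Finset.sum_congr rfl fun k _ => by rw [one_pow]; ring

lemma key (x : ℝ) (m n : ℕ) (hn : 1 ≤ n) :
    x * ∑ k ∈ range (n+1), (n.choose k : ℝ) * ((m:ℝ)^k * geomPoly (n-k) x m)
      = ((m:ℝ) + x) * geomPoly n x m := by
  have hmain : ∑ k ∈ range (n+1), (n.choose k : ℝ) * ((m:ℝ)^k * geomPoly (n-k) x m)
      = ∑ a ∈ range (n+1), (cc n (a+1) + cc n a) * x^a * (m:ℝ)^(n-a) := by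
    calc ∑ k ∈ range (n+1), (n.choose k : ℝ) * ((m:ℝ)^k * geomPoly (n-k) x m)
        = ∑ k ∈ range (n+1), ∑ a ∈ range (n+1),
            (n.choose k : ℝ) * (cc (n-k) a * x^a * (m:ℝ)^(n-a)) := by
          apply Finset.sum_congr rfl
          intro k hk
          rw [step1 x m n k (by have := Finset.mem_range.mp hk; omega), Finset.mul_sum]
      _ = ∑ a ∈ range (n+1), ∑ k ∈ range (n+1),
            (n.choose k : ℝ) * (cc (n-k) a * x^a * (m:ℝ)^(n-a)) := Finset.sum_comm
      _ = ∑ a ∈ range (n+1), (cc n (a+1) + cc n a) * x^a * (m:ℝ)^(n-a) := by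
          apply Finset.sum_congr rfl
          intro a _
          rw [← innerSum n a, Finset.sum_mul, Finset.sum_mul]
          exact Finset.sum_congr rfl fun k _ => by ring
  rw [hmain]
  have hsplit : x * ∑ a ∈ range (n+1), (cc n (a+1) + cc n a) * x^a * (m:ℝ)^(n-a)
      = (∑ a ∈ range (n+1), cc n (a+1) * x^(a+1) * (m:ℝ)^(n-a))
        + x * ∑ a ∈ range (n+1), cc n a * x^a * (m:ℝ)^(n-a) := by
    rw [Finset.mul_sum, Finset.mul_sum, ← Finset.sum_add_distrib]
    exact Finset.sum_congr rfl fun a _ => by ring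
  rw [hsplit, ← geomPoly_eq]
  have hsecond : ∑ a ∈ range (n+1), cc n (a+1) * x^(a+1) * (m:ℝ)^(n-a)
      = (m:ℝ) * geomPoly n x m := by
    rw [Finset.sum_range_succ, cc_eq_zero n (n+1) (by omega), geomPoly_eq,
      Finset.sum_range_succ', cc_zero_right n hn]
    simp only [zero_mul, add_zero, mul_zero]
    rw [Finset.mul_sum]
    apply Finset.sum_congr rfl
    intro a ha
    have hlt : a < n := Finset.mem_range.mp ha
    have hm : (m:ℝ) * (m:ℝ)^(n-(a+1)) = (m:ℝ)^(n-a) := by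
      rw [← pow_succ']; congr 1; omega
    calc cc n (a+1) * x^(a+1) * (m:ℝ)^(n-a)
        = cc n (a+1) * x^(a+1) * ((m:ℝ) * (m:ℝ)^(n-(a+1))) := by rw [hm]
      _ = (m:ℝ) * (cc n (a+1) * x^(a+1) * (m:ℝ)^(n-(a+1))) := by ring
  rw [hsecond]
  ring

/-- The EGF of the bivariate geometric polynomials satisfies
`(m + x − x·e^{mz}) · ∑_{n≥0} ω_n(x,m) z^n/n! = m` in `ℝ[[z]]`;
equivalently `∑ ω_n(x,m) z^n/n! = m/(m + x − x e^{mz})`. -/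
theorem geomPoly_egf (m : ℕ) (hm : 0 < m) (x : ℝ) :
    (PowerSeries.C ((m : ℝ) + x) -
        PowerSeries.C x * PowerSeries.rescale (m : ℝ) (PowerSeries.exp ℝ)) *
      PowerSeries.mk (fun n => geomPoly n x m / n.factorial) =
      PowerSeries.C (m : ℝ) := by
  ext n
  rw [PowerSeries.coeff_mul, Nat.sum_antidiagonal_eq_sum_range_succ_mk]
  simp only [map_sub, PowerSeries.coeff_C, PowerSeries.coeff_C_mul,
    PowerSeries.coeff_rescale, PowerSeries.coeff_exp, PowerSeries.coeff_mk]
  rcases Nat.eq_zero_or_pos n with hn | hn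
  · subst hn
    simp [geomPoly_zero]
  · rw [if_neg (by omega : ¬ n = 0)]
    have hstep : ∀ k ∈ range n.succ,
        ((if k = 0 then (m:ℝ) + x else 0) - x * ((m:ℝ) ^ k * (algebraMap ℚ ℝ) (1 / k.factorial))) *
          (geomPoly (n - k) x m / (n - k).factorial)
        = (if k = 0 then ((m:ℝ)+x) * geomPoly n x m / n.factorial else 0)
          - x * ((n.choose k : ℝ) * ((m:ℝ)^k * geomPoly (n-k) x m)) / n.factorial := by
      intro k hk
      have hkn : k ≤ n := by have := Finset.mem_range.mp hk; omega
      have hfac : ((n.choose k : ℝ)) * (k.factorial : ℝ) * ((n-k).factorial : ℝ)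
          = (n.factorial : ℝ) := by
        exact_mod_cast congrArg (Nat.cast : ℕ → ℝ)
          (Nat.choose_mul_factorial_mul_factorial hkn)
      have halg : (algebraMap ℚ ℝ) (1 / (k.factorial : ℚ)) = 1 / (k.factorial : ℝ) := by
        push_cast [map_div₀]
        norm_num
      rw [halg]
      rcases Nat.eq_zero_or_pos k with rfl | hk0
      · simp only [if_pos rfl, ↓reduceIte, Nat.sub_zero, Nat.choose_zero_right]
        have : (n.choose 0 : ℝ) = 1 := by norm_num
        field_simp
        ring
      · rw [if_neg (by omega : ¬ k = 0), if_neg (by omega : ¬ k = 0)]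
        have h1 : (k.factorial : ℝ) ≠ 0 := by positivity
        have h2 : ((n-k).factorial : ℝ) ≠ 0 := by positivity
        have h3 : (n.factorial : ℝ) ≠ 0 := by positivity
        field_simp
        linear_combination (x * (m:ℝ)^k * geomPoly (n-k) x m) * hfac
    rw [Finset.sum_congr rfl hstep, Finset.sum_sub_distrib]
    rw [Finset.sum_ite_eq' (range n.succ) 0
      (fun _ => ((m:ℝ)+x) * geomPoly n x m / n.factorial)]
    rw [if_pos (Finset.mem_range.mpr (Nat.succ_pos n))]
    have : ∑ k ∈ range n.succ, x * ((n.choose k : ℝ) * ((m:ℝ)^k * geomPoly (n-k) x m)) / n.factorial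
        = (x * ∑ k ∈ range (n+1), (n.choose k : ℝ) * ((m:ℝ)^k * geomPoly (n-k) x m)) / n.factorial := by
      rw [Finset.mul_sum, Finset.sum_div]
    rw [this, key x m n hn]
    ring
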